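/- Let (b_k) be a strictly decreasing sequence of positive reals with b_k \to 0 and \sum_{k=1}^\infty b_k/k = \infty. Then the series \sum_{k=1}^\infty b_k sin(kx) converges for every real x, and its sum function is not Lebesgue integrable on [0, \pi]. -/

import Mathlib

open Filter Topology Finset Real MeasureTheory

lemma two_sin_sin (a c : ℝ) : Real.cos (a - c) - Real.cos (a + c) = 2 * Real.sin a * Real.sin c := by
  rw [Real.cos_sub, Real.cos_add]; ring

lemma two_cos_sin (a c : ℝ) : Real.sin (a + c) - Real.sin (a - c) = 2 * Real.cos a * Real.sin c := by
  rw [Real.sin_sub, Real.sin_add]; ring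

lemma sum_sin_eq (x : ℝ) (n : ℕ) :
    (∑ k ∈ Finset.Icc 1 n, Real.sin (k * x)) * (2 * Real.sin (x / 2)) =
      Real.cos (x / 2) - Real.cos ((n + 1 / 2) * x) := by
  induction n with
  | zero => simp; ring_nf
  | succ n ih =>
      rw [Finset.sum_Icc_succ_top (Nat.le_add_left 1 n), add_mul, ih]
      have h := two_sin_sin ((n + 1 : ℕ) * x) (x / 2)
      push_cast at h ⊢
      have h1 : ((n:ℝ) + 1) * x - x / 2 = ((n:ℝ) + 1/2) * x := by ring
      have h2 : ((n:ℝ) + 1) * x + x / 2 = ((n:ℝ) + 1 + 1/2) * x := by ring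
      rw [h1, h2] at h
      linarith

lemma sum_cos_eq (x : ℝ) (n : ℕ) :
    (∑ k ∈ Finset.Icc 1 n, Real.cos (k * x)) * (2 * Real.sin (x / 2)) =
      Real.sin ((n + 1 / 2) * x) - Real.sin (x / 2) := by
  induction n with
  | zero => simp; ring_nf
  | succ n ih =>
      rw [Finset.sum_Icc_succ_top (Nat.le_add_left 1 n), add_mul, ih]
      have h := two_cos_sin ((n + 1 : ℕ) * x) (x / 2)
      push_cast at h ⊢
      have h1 : ((n:ℝ) + 1) * x - x / 2 = ((n:ℝ) + 1/2) * x := by ring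
      have h2 : ((n:ℝ) + 1) * x + x / 2 = ((n:ℝ) + 1 + 1/2) * x := by ring
      rw [h1, h2] at h
      linarith

lemma sum_sin_bound (x : ℝ) (hx : Real.sin (x / 2) ≠ 0) (n : ℕ) :
    |∑ k ∈ Finset.Icc 1 n, Real.sin (k * x)| ≤ 1 / |Real.sin (x / 2)| := by
  have h := sum_sin_eq x n
  have hpos : 0 < |Real.sin (x / 2)| := abs_pos.mpr hx
  rw [le_div_iff₀ hpos]
  have hb : |(∑ k ∈ Finset.Icc 1 n, Real.sin (k * x)) * (2 * Real.sin (x / 2))| ≤ 2 := by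
    rw [h]
    calc |Real.cos (x / 2) - Real.cos ((n + 1 / 2) * x)|
        ≤ |Real.cos (x / 2)| + |Real.cos ((n + 1 / 2) * x)| := abs_sub _ _
      _ ≤ 1 + 1 := add_le_add (Real.abs_cos_le_one _) (Real.abs_cos_le_one _)
      _ = 2 := by norm_num
  rw [abs_mul, abs_mul, abs_of_nonneg (by norm_num : (0:ℝ) ≤ 2)] at hb
  nlinarith [abs_nonneg (∑ k ∈ Finset.Icc 1 n, Real.sin (k * x)), abs_nonneg (Real.sin (x/2))]


lemma sum_cos_bound (x : ℝ) (hx : Real.sin (x / 2) ≠ 0) (n : ℕ) :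
    |∑ k ∈ Finset.Icc 1 n, Real.cos (k * x)| ≤ 1 / |Real.sin (x / 2)| := by
  have h := sum_cos_eq x n
  have hpos : 0 < |Real.sin (x / 2)| := abs_pos.mpr hx
  rw [le_div_iff₀ hpos]
  have hb : |(∑ k ∈ Finset.Icc 1 n, Real.cos (k * x)) * (2 * Real.sin (x / 2))| ≤ 2 := by
    rw [h]
    calc |Real.sin ((n + 1 / 2) * x) - Real.sin (x / 2)|
        ≤ |Real.sin ((n + 1 / 2) * x)| + |Real.sin (x / 2)| := abs_sub _ _
      _ ≤ 1 + 1 := add_le_add (Real.abs_sin_le_one _) (Real.abs_sin_le_one _)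
      _ = 2 := by norm_num
  rw [abs_mul, abs_mul, abs_of_nonneg (by norm_num : (0:ℝ) ≤ 2)] at hb
  nlinarith [abs_nonneg (∑ k ∈ Finset.Icc 1 n, Real.cos (k * x)), abs_nonneg (Real.sin (x/2))]

/-- Abel summation bound. -/
lemma abel_bound (a c : ℕ → ℝ) (m : ℕ) (M : ℝ)
    (ha0 : ∀ k, m + 1 ≤ k → 0 ≤ a k) (hmono : ∀ k, m + 1 ≤ k → a (k + 1) ≤ a k)
    (hc : ∀ p, |∑ k ∈ Finset.Ioc m p, c k| ≤ M) (n : ℕ) :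
    |∑ k ∈ Finset.Ioc m n, a k * c k| ≤ a (m + 1) * M := by
  have hM : 0 ≤ M := le_trans (abs_nonneg _) (hc m)
  rcases le_or_gt n m with hnm | hmn
  · rw [Finset.Ioc_eq_empty (by omega)]
    simpa using mul_nonneg (ha0 _ le_rfl) hM
  -- strengthened claim for n ≥ m+1
  have key : ∀ n, m + 1 ≤ n →
      |∑ k ∈ Finset.Ioc m n, a k * c k - a n * ∑ k ∈ Finset.Ioc m n, c k|
        ≤ (a (m + 1) - a n) * M := by
    intro n hn
    induction n, hn using Nat.le_induction with
    | base =>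
        rw [Nat.Ioc_succ_singleton, Finset.sum_singleton, Finset.sum_singleton]
        simp [mul_nonneg (sub_nonneg.mpr (le_refl (a (m+1)))) hM]
    | succ n hn ih =>
        have hs1 : ∑ k ∈ Finset.Ioc m (n + 1), a k * c k
            = (∑ k ∈ Finset.Ioc m n, a k * c k) + a (n + 1) * c (n + 1) :=
          Finset.sum_Ioc_succ_top (by omega) _
        have hs2 : ∑ k ∈ Finset.Ioc m (n + 1), c k
            = (∑ k ∈ Finset.Ioc m n, c k) + c (n + 1) :=
          Finset.sum_Ioc_succ_top (by omega) _
        have heq : ∑ k ∈ Finset.Ioc m (n+1), a k * c k - a (n+1) * ∑ k ∈ Finset.Ioc m (n+1), c k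
            = (∑ k ∈ Finset.Ioc m n, a k * c k - a n * ∑ k ∈ Finset.Ioc m n, c k)
              + (a n - a (n + 1)) * ∑ k ∈ Finset.Ioc m n, c k := by
          rw [hs1, hs2]; ring
        rw [heq]
        calc _ ≤ |∑ k ∈ Finset.Ioc m n, a k * c k - a n * ∑ k ∈ Finset.Ioc m n, c k|
              + |(a n - a (n + 1)) * ∑ k ∈ Finset.Ioc m n, c k| := abs_add_le _ _
          _ ≤ (a (m + 1) - a n) * M + (a n - a (n + 1)) * M := by
              apply add_le_add ih
              rw [abs_mul, abs_of_nonneg (sub_nonneg.mpr (hmono n hn))]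
              exact mul_le_mul_of_nonneg_left (hc n) (sub_nonneg.mpr (hmono n hn))
          _ = (a (m + 1) - a (n + 1)) * M := by ring
  have h1 := key n hmn
  calc |∑ k ∈ Finset.Ioc m n, a k * c k|
      ≤ |∑ k ∈ Finset.Ioc m n, a k * c k - a n * ∑ k ∈ Finset.Ioc m n, c k|
        + |a n * ∑ k ∈ Finset.Ioc m n, c k| := by
        have := abs_add_le (∑ k ∈ Finset.Ioc m n, a k * c k - a n * ∑ k ∈ Finset.Ioc m n, c k)
          (a n * ∑ k ∈ Finset.Ioc m n, c k)
        simpa using this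
    _ ≤ (a (m + 1) - a n) * M + a n * M := by
        apply add_le_add h1
        rw [abs_mul, abs_of_nonneg (ha0 n hmn)]
        exact mul_le_mul_of_nonneg_left (hc n) (ha0 n hmn)
    _ = a (m + 1) * M := by ring

lemma segment_bound (g : ℕ → ℝ) (M : ℝ) (hg : ∀ n, |∑ k ∈ Finset.Icc 1 n, g k| ≤ M)
    (m p : ℕ) : |∑ k ∈ Finset.Ioc m p, g k| ≤ 2 * M := by
  have hM : 0 ≤ M := le_trans (abs_nonneg _) (hg 0)
  rcases le_or_gt p m with h | h
  · rw [Finset.Ioc_eq_empty (by omega)]; simpa using by linarith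
  · have hsplit : (∑ k ∈ Finset.Ioc 0 m, g k) + ∑ k ∈ Finset.Ioc m p, g k
        = ∑ k ∈ Finset.Ioc 0 p, g k :=
      Finset.sum_Ioc_consecutive _ (Nat.zero_le m) h.le
    have h1 := hg m
    have h2 := hg p
    have e : ∀ q : ℕ, ∑ k ∈ Finset.Ioc 0 q, g k = ∑ k ∈ Finset.Icc 1 q, g k := fun q => by
      rw [← Finset.Icc_add_one_left_eq_Ioc, zero_add]
    rw [e, e] at hsplit
    have : ∑ k ∈ Finset.Ioc m p, g k
        = (∑ k ∈ Finset.Icc 1 p, g k) - ∑ k ∈ Finset.Icc 1 m, g k := by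
      rw [← hsplit]; ring
    rw [this]
    calc |(∑ k ∈ Finset.Icc 1 p, g k) - ∑ k ∈ Finset.Icc 1 m, g k|
        ≤ |∑ k ∈ Finset.Icc 1 p, g k| + |∑ k ∈ Finset.Icc 1 m, g k| := abs_sub _ _
      _ ≤ M + M := add_le_add h2 h1
      _ = 2 * M := by ring

lemma bmono (b : ℕ → ℝ) (hdec : ∀ j k : ℕ, 1 ≤ j → j < k → b k < b j)
    {j k : ℕ} (hj : 1 ≤ j) (hjk : j ≤ k) : b k ≤ b j := by
  rcases eq_or_lt_of_le hjk with rfl | h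
  · exact le_rfl
  · exact (hdec j k hj h).le

/-- tail bound for the sine series at a point with `sin (x/2) ≠ 0`. -/
lemma sine_tail_bound (b : ℕ → ℝ)
    (hpos : ∀ k : ℕ, 1 ≤ k → 0 < b k)
    (hdec : ∀ j k : ℕ, 1 ≤ j → j < k → b k < b j)
    (x : ℝ) (hx : Real.sin (x / 2) ≠ 0) (m n : ℕ) :
    |∑ k ∈ Finset.Ioc m n, b k * Real.sin (k * x)| ≤ b (m + 1) * (2 * (1 / |Real.sin (x / 2)|)) := by
  apply abel_bound
  · intro k hk; exact (hpos k (by omega)).le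
  · intro k hk; exact bmono b hdec (by omega) (by omega)
  · intro p; exact segment_bound _ _ (sum_sin_bound x hx) m p

lemma sine_series_conv (b : ℕ → ℝ)
    (hpos : ∀ k : ℕ, 1 ≤ k → 0 < b k)
    (hdec : ∀ j k : ℕ, 1 ≤ j → j < k → b k < b j)
    (hlim : Tendsto b atTop (𝓝 0)) (x : ℝ) :
    ∃ L : ℝ, Tendsto
      (fun n : ℕ => ∑ k ∈ Finset.Icc 1 n, b k * Real.sin (k * x)) atTop (𝓝 L) := by
  by_cases hx : Real.sin (x / 2) = 0
  · -- x is an integer multiple of 2π, all terms vanish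
    refine ⟨0, ?_⟩
    have hz : ∀ k : ℕ, Real.sin (k * x) = 0 := by
      intro k
      rw [Real.sin_eq_zero_iff] at hx
      obtain ⟨j, hj⟩ := hx
      have hxval : x = 2 * j * π := by
        field_simp at hj; linarith
      rw [hxval]
      have : (k : ℝ) * (2 * j * π) = ((2 * k * j : ℤ) : ℝ) * π := by push_cast; ring
      rw [this, Real.sin_int_mul_pi]
    have : ∀ n : ℕ, ∑ k ∈ Finset.Icc 1 n, b k * Real.sin (k * x) = 0 := by
      intro n; apply Finset.sum_eq_zero; intro k _; rw [hz k, mul_zero]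
    simp only [this]
    exact tendsto_const_nhds
  · have hcs : CauchySeq (fun n : ℕ => ∑ k ∈ Finset.Icc 1 n, b k * Real.sin (k * x)) := by
      apply cauchySeq_of_le_tendsto_0 (fun N => b (N + 1) * (2 * (1 / |Real.sin (x / 2)|)))
      · intro n m N hn hm
        have key : ∀ p q : ℕ, N ≤ p → p ≤ q →
            dist (∑ k ∈ Finset.Icc 1 q, b k * Real.sin (k * x))
              (∑ k ∈ Finset.Icc 1 p, b k * Real.sin (k * x))
              ≤ b (N + 1) * (2 * (1 / |Real.sin (x / 2)|)) := by
          intro p q hp hpq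
          rw [Real.dist_eq]
          have e : ∀ r : ℕ, ∑ k ∈ Finset.Ioc 0 r, b k * Real.sin (k * x)
              = ∑ k ∈ Finset.Icc 1 r, b k * Real.sin (k * x) := fun r => by
            rw [← Finset.Icc_add_one_left_eq_Ioc, zero_add]
          have hsplit := Finset.sum_Ioc_consecutive (fun k => b k * Real.sin (k * x))
            (Nat.zero_le p) hpq
          rw [e, e] at hsplit
          have : (∑ k ∈ Finset.Icc 1 q, b k * Real.sin (k * x))
              - ∑ k ∈ Finset.Icc 1 p, b k * Real.sin (k * x)
              = ∑ k ∈ Finset.Ioc p q, b k * Real.sin (k * x) := by rw [← hsplit]; ring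
          rw [this]
          calc |∑ k ∈ Finset.Ioc p q, b k * Real.sin (k * x)|
              ≤ b (p + 1) * (2 * (1 / |Real.sin (x / 2)|)) :=
                sine_tail_bound b hpos hdec x hx p q
            _ ≤ b (N + 1) * (2 * (1 / |Real.sin (x / 2)|)) := by
                apply mul_le_mul_of_nonneg_right (bmono b hdec (by omega) (by omega))
                positivity
        rcases le_total m n with h | h
        · exact key m n hm h
        · rw [dist_comm]; exact key n m hn h
      · have : Tendsto (fun N : ℕ => b (N + 1)) atTop (𝓝 0) :=
          hlim.comp (tendsto_add_atTop_nat 1)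
        have := this.mul_const (2 * (1 / |Real.sin (x / 2)|))
        simpa using this
    exact cauchySeq_tendsto_of_complete hcs

lemma cos_odd_pi (j : ℕ) : Real.cos (((2 * j + 1 : ℕ) : ℝ) * π) = -1 := by
  have : ((2 * j + 1 : ℕ) : ℝ) * π = j * (2 * π) + π := by push_cast; ring
  rw [this, Real.cos_nat_mul_two_pi_add_pi]

lemma cos_even_pi (j : ℕ) : Real.cos (((2 * j : ℕ) : ℝ) * π) = 1 := by
  have : ((2 * j : ℕ) : ℝ) * π = j * (2 * π) := by push_cast; ring
  rw [this, Real.cos_nat_mul_two_pi]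

lemma pairing (b : ℕ → ℝ)
    (hpos : ∀ k : ℕ, 1 ≤ k → 0 < b k)
    (hdec : ∀ j k : ℕ, 1 ≤ j → j < k → b k < b j)
    (x : ℝ) (m : ℕ) (hcos : ∀ k : ℕ, 1 ≤ k → k ≤ m → 1 / 2 ≤ Real.cos (k * x)) :
    ∀ j : ℕ, 2 * j ≤ m →
      (1 / 2) * ∑ k ∈ Finset.Icc 1 (2 * j), b k / k
        ≤ ∑ k ∈ Finset.Icc 1 (2 * j), (b k / k) * (Real.cos (k * x) - Real.cos (k * π)) := by
  intro j
  induction j with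
  | zero => intro _; simp
  | succ j ih =>
      intro hj
      have h2j : 2 * (j + 1) = (2 * j + 1) + 1 := by ring
      rw [h2j,
        Finset.sum_Icc_succ_top (by omega : 1 ≤ 2 * j + 1 + 1),
        Finset.sum_Icc_succ_top (by omega : 1 ≤ 2 * j + 1),
        Finset.sum_Icc_succ_top (by omega : 1 ≤ 2 * j + 1 + 1),
        Finset.sum_Icc_succ_top (by omega : 1 ≤ 2 * j + 1)]
      have hih := ih (by omega)
      -- values of cos(kπ)
      have hodd : Real.cos (((2 * j + 1 : ℕ) : ℝ) * π) = -1 := cos_odd_pi j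
      have heven : Real.cos (((2 * j + 1 + 1 : ℕ) : ℝ) * π) = 1 := by
        have : 2 * j + 1 + 1 = 2 * (j + 1) := by ring
        rw [this]; exact cos_even_pi (j + 1)
      rw [hodd, heven]
      have hca := hcos (2 * j + 1) (by omega) (by omega)
      have hcb := hcos (2 * j + 1 + 1) (by omega) (by omega)
      have hp : (0:ℝ) < b (2 * j + 1) := hpos _ (by omega)
      have hq : (0:ℝ) < b (2 * j + 1 + 1) := hpos _ (by omega)
      have hpq : b (2 * j + 1 + 1) ≤ b (2 * j + 1) := (hdec _ _ (by omega) (by omega)).le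
      set p := b (2 * j + 1) / ((2 * j + 1 : ℕ) : ℝ) with hpdef
      set q := b (2 * j + 1 + 1) / ((2 * j + 1 + 1 : ℕ) : ℝ) with hqdef
      have hqp : q ≤ p := by
        rw [hpdef, hqdef]
        apply div_le_div₀ hp.le hpq (by positivity)
        push_cast; linarith
      have hq0 : 0 ≤ q := by rw [hqdef]; positivity
      have hbound1 : p * (Real.cos (((2 * j + 1 : ℕ) : ℝ) * x) - (-1))
          ≥ (3/2) * p := by
        have hp0 : 0 ≤ p := by rw [hpdef]; positivity
        nlinarith [hca]
      have hbound2 : q * (Real.cos (((2 * j + 1 + 1 : ℕ) : ℝ) * x) - 1)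
          ≥ -(1/2) * q := by
        nlinarith [hcb, Real.cos_le_one (((2 * j + 1 + 1 : ℕ) : ℝ) * x)]
      nlinarith [hih]

lemma integral_partial_sum (b : ℕ → ℝ) (x : ℝ) (n : ℕ) :
    ∫ t in x..π, ∑ k ∈ Finset.Icc 1 n, b k * Real.sin (k * t)
      = ∑ k ∈ Finset.Icc 1 n, (b k / k) * (Real.cos (k * x) - Real.cos (k * π)) := by
  rw [intervalIntegral.integral_finset_sum]
  · apply Finset.sum_congr rfl
    intro k hk
    have hk1 : 1 ≤ k := (Finset.mem_Icc.mp hk).1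
    have hk0 : ((k : ℝ)) ≠ 0 := by positivity
    rw [intervalIntegral.integral_const_mul]
    have := intervalIntegral.integral_comp_mul_left (f := Real.sin) (a := x) (b := π) hk0
    rw [this, integral_sin, smul_eq_mul]
    field_simp
  · intro k _
    exact (Continuous.intervalIntegrable (by continuity) x π)

lemma sum_Icc_sub (g : ℕ → ℝ) {p q : ℕ} (h : p ≤ q) :
    (∑ k ∈ Finset.Icc 1 q, g k) - ∑ k ∈ Finset.Icc 1 p, g k = ∑ k ∈ Finset.Ioc p q, g k := by
  have e : ∀ r : ℕ, ∑ k ∈ Finset.Ioc 0 r, g k = ∑ k ∈ Finset.Icc 1 r, g k := fun r => by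
    rw [← Finset.Icc_add_one_left_eq_Ioc, zero_add]
  have hsplit := Finset.sum_Ioc_consecutive g (Nat.zero_le p) h
  rw [e, e] at hsplit
  linarith

lemma integral_tendsto (b : ℕ → ℝ)
    (hpos : ∀ k : ℕ, 1 ≤ k → 0 < b k)
    (hdec : ∀ j k : ℕ, 1 ≤ j → j < k → b k < b j)
    (hlim : Tendsto b atTop (𝓝 0))
    (f : ℝ → ℝ)
    (hf : ∀ x : ℝ, Tendsto
        (fun n : ℕ => ∑ k ∈ Finset.Icc 1 n, b k * Real.sin (k * x)) atTop (𝓝 (f x)))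
    (hint : IntegrableOn f (Set.Icc 0 π) volume)
    (x : ℝ) (hx0 : 0 < x) (hxpi : x ≤ π) :
    Tendsto (fun n : ℕ => ∑ k ∈ Finset.Icc 1 n, (b k / k) * (Real.cos (k * x) - Real.cos (k * π)))
      atTop (𝓝 (∫ t in x..π, f t)) := by
  have hsx : 0 < Real.sin (x / 2) :=
    Real.sin_pos_of_pos_of_lt_pi (by linarith) (by nlinarith [Real.pi_pos])
  have hfi : IntervalIntegrable f volume x π := by
    rw [intervalIntegrable_iff_integrableOn_Ioc_of_le hxpi]
    exact hint.mono_set (fun t ht => ⟨by linarith [ht.1], ht.2⟩)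
  -- uniform tail bound on [x, π]
  have hbnd : ∀ n : ℕ, ∀ t ∈ Set.Ioc x π,
      |f t - ∑ k ∈ Finset.Icc 1 n, b k * Real.sin (k * t)|
        ≤ b (n + 1) * (2 * (1 / Real.sin (x / 2))) := by
    intro n t ht
    have hst : Real.sin (x / 2) ≤ Real.sin (t / 2) := by
      apply Real.sin_le_sin_of_le_of_le_pi_div_two (by linarith [Real.pi_pos])
        (by linarith [ht.2])
      linarith [ht.1]
    have hst0 : Real.sin (t / 2) ≠ 0 := ne_of_gt (lt_of_lt_of_le hsx hst)
    have hq : Tendsto (fun q : ℕ => (∑ k ∈ Finset.Icc 1 q, b k * Real.sin (k * t))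
        - ∑ k ∈ Finset.Icc 1 n, b k * Real.sin (k * t)) atTop
        (𝓝 (f t - ∑ k ∈ Finset.Icc 1 n, b k * Real.sin (k * t))) :=
      (hf t).sub_const _
    apply le_of_tendsto hq.abs
    filter_upwards [eventually_ge_atTop n] with q hqn
    rw [sum_Icc_sub _ hqn]
    calc |∑ k ∈ Finset.Ioc n q, b k * Real.sin (k * t)|
        ≤ b (n + 1) * (2 * (1 / |Real.sin (t / 2)|)) := sine_tail_bound b hpos hdec t hst0 n q
      _ ≤ b (n + 1) * (2 * (1 / Real.sin (x / 2))) := by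
          apply mul_le_mul_of_nonneg_left _ (hpos (n + 1) (by omega)).le
          apply mul_le_mul_of_nonneg_left _ (by norm_num)
          rw [abs_of_pos (lt_of_lt_of_le hsx hst)]
          exact one_div_le_one_div_of_le hsx hst
  -- integral difference bound
  have hdist : ∀ n : ℕ,
      dist (∑ k ∈ Finset.Icc 1 n, (b k / k) * (Real.cos (k * x) - Real.cos (k * π)))
        (∫ t in x..π, f t) ≤ b (n + 1) * (2 * (1 / Real.sin (x / 2))) * |π - x| := by
    intro n
    rw [Real.dist_eq, ← integral_partial_sum b x n]
    have hSi : IntervalIntegrable (fun t => ∑ k ∈ Finset.Icc 1 n, b k * Real.sin (k * t))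
        volume x π := Continuous.intervalIntegrable (by continuity) x π
    rw [← intervalIntegral.integral_sub hSi hfi]
    have := intervalIntegral.norm_integral_le_of_norm_le_const
      (a := x) (b := π) (C := b (n + 1) * (2 * (1 / Real.sin (x / 2))))
      (f := fun t => (∑ k ∈ Finset.Icc 1 n, b k * Real.sin (k * t)) - f t) ?_
    · simpa [Real.norm_eq_abs] using this
    · intro t ht
      rw [Set.uIoc_of_le hxpi] at ht
      rw [Real.norm_eq_abs, abs_sub_comm]
      exact hbnd n t ht
  rw [tendsto_iff_dist_tendsto_zero]
  apply squeeze_zero (fun n => dist_nonneg) hdist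
  have h1 : Tendsto (fun n : ℕ => b (n + 1)) atTop (𝓝 0) := hlim.comp (tendsto_add_atTop_nat 1)
  have := (h1.mul_const (2 * (1 / Real.sin (x / 2)))).mul_const |π - x|
  simpa using this

lemma tail_T (b : ℕ → ℝ)
    (hpos : ∀ k : ℕ, 1 ≤ k → 0 < b k)
    (hdec : ∀ j k : ℕ, 1 ≤ j → j < k → b k < b j)
    (x : ℝ) (hx : Real.sin (x / 2) ≠ 0) (m n : ℕ) :
    |∑ k ∈ Finset.Ioc m n, (b k / k) * (Real.cos (k * x) - Real.cos (k * π))|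
      ≤ (b (m + 1) / (m + 1)) * (2 * (1 / |Real.sin (x / 2)|))
        + (b (m + 1) / (m + 1)) * 2 := by
  have hmono : ∀ k, m + 1 ≤ k → b (k + 1) / ((k + 1 : ℕ) : ℝ) ≤ b k / ((k : ℕ) : ℝ) := by
    intro k hk
    have hk1 : 1 ≤ k := by omega
    apply div_le_div₀ (hpos k hk1).le (bmono b hdec hk1 (by omega)) (by positivity)
    push_cast; linarith
  have ha0 : ∀ k, m + 1 ≤ k → 0 ≤ b k / ((k : ℕ) : ℝ) := by
    intro k hk; have : (0:ℝ) < b k := hpos k (by omega); positivity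
  have hsplit : ∑ k ∈ Finset.Ioc m n, (b k / k) * (Real.cos (k * x) - Real.cos (k * π))
      = (∑ k ∈ Finset.Ioc m n, (b k / k) * Real.cos (k * x))
        - ∑ k ∈ Finset.Ioc m n, (b k / k) * Real.cos (k * π) := by
    rw [← Finset.sum_sub_distrib]
    apply Finset.sum_congr rfl
    intro k _; ring
  rw [hsplit]
  have h1 : |∑ k ∈ Finset.Ioc m n, (b k / k) * Real.cos (k * x)|
      ≤ (b (m + 1) / (m + 1)) * (2 * (1 / |Real.sin (x / 2)|)) := by
    have := abel_bound (fun k => b k / k) (fun k => Real.cos (k * x)) m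
      (2 * (1 / |Real.sin (x / 2)|)) ha0 hmono
      (fun p => segment_bound _ _ (sum_cos_bound x hx) m p) n
    simpa using this
  have hpi2 : Real.sin (π / 2) ≠ 0 := by rw [Real.sin_pi_div_two]; norm_num
  have h2 : |∑ k ∈ Finset.Ioc m n, (b k / k) * Real.cos (k * π)|
      ≤ (b (m + 1) / (m + 1)) * 2 := by
    have := abel_bound (fun k => b k / k) (fun k => Real.cos (k * π)) m
      (2 * (1 / |Real.sin (π / 2)|)) ha0 hmono
      (fun p => segment_bound _ _ (sum_cos_bound π hpi2) m p) n
    rw [Real.sin_pi_div_two] at this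
    simpa using this
  calc |(∑ k ∈ Finset.Ioc m n, (b k / k) * Real.cos (k * x))
        - ∑ k ∈ Finset.Ioc m n, (b k / k) * Real.cos (k * π)|
      ≤ _ + _ := abs_sub _ _
    _ ≤ _ := add_le_add h1 h2

/-- If `(b_k)` is a strictly decreasing sequence of positive reals tending to `0`
with `∑ b_k / k = ∞`, then `∑ b_k sin(kx)` converges for every real `x`, and the sum
function is not Lebesgue integrable on `[0, π]`. -/
theorem sine_series_sum_not_integrable (b : ℕ → ℝ)
    (hpos : ∀ k : ℕ, 1 ≤ k → 0 < b k)
    (hdec : ∀ j k : ℕ, 1 ≤ j → j < k → b k < b j)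
    (hlim : Tendsto b atTop (𝓝 0))
    (hdiv : Tendsto (fun n : ℕ => ∑ k ∈ Finset.Icc 1 n, b k / k) atTop atTop) :
    (∀ x : ℝ, ∃ L : ℝ, Tendsto
        (fun n : ℕ => ∑ k ∈ Finset.Icc 1 n, b k * Real.sin (k * x)) atTop (𝓝 L)) ∧
    (∀ f : ℝ → ℝ,
      (∀ x : ℝ, Tendsto
        (fun n : ℕ => ∑ k ∈ Finset.Icc 1 n, b k * Real.sin (k * x)) atTop (𝓝 (f x))) →
      ¬ IntegrableOn f (Set.Icc 0 π) volume) := by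
  constructor
  · exact fun x => sine_series_conv b hpos hdec hlim x
  · intro f hf hint
    have hb1 : 0 < b 1 := hpos 1 le_rfl
    set A := ∫ t in (0:ℝ)..π, |f t| with hAdef
    have hA0 : 0 ≤ A := intervalIntegral.integral_nonneg Real.pi_pos.le
      (fun t _ => abs_nonneg (f t))
    -- choose m
    obtain ⟨N, hN⟩ := Filter.eventually_atTop.mp
      (Filter.tendsto_atTop.mp hdiv (2 * A + 20 * b 1 + 2))
    set m := 2 * (N + 1) with hmdef
    have hm2 : 2 ≤ m := by omega
    have hmR : (2:ℝ) ≤ (m:ℝ) := by exact_mod_cast hm2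
    set x := 1 / (m : ℝ) with hxdef
    have hx0 : 0 < x := by positivity
    have hxhalf : x ≤ 1 / 2 := by
      rw [hxdef]; apply div_le_div_of_nonneg_left (by norm_num) (by norm_num) hmR
    have hxpi : x ≤ π := by nlinarith [Real.pi_gt_three]
    have hsx : 0 < Real.sin (x / 2) :=
      Real.sin_pos_of_pos_of_lt_pi (by linarith) (by nlinarith [Real.pi_gt_three])
    -- the limit of the integrated partial sums
    have hT := integral_tendsto b hpos hdec hlim f hf hint x hx0 hxpi
    set Φ := ∫ t in x..π, f t with hΦdef
    -- |Φ| ≤ A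
    have habs : |f| =ᵐ[volume.restrict (Set.Ioc (0:ℝ) π)] |f| := .rfl
    have hfabs : IntervalIntegrable (fun t => |f t|) volume 0 π := by
      rw [intervalIntegrable_iff_integrableOn_Ioc_of_le Real.pi_pos.le]
      exact (hint.mono_set Set.Ioc_subset_Icc_self).abs
    have hΦA : |Φ| ≤ A := by
      calc |Φ| ≤ ∫ t in x..π, |f t| := intervalIntegral.abs_integral_le_integral_abs hxpi
        _ ≤ A := intervalIntegral.integral_mono_interval hx0.le hxpi le_rfl
            (ae_of_all _ (fun t => abs_nonneg (f t))) hfabs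
    -- tail bound: |Φ − T m| ≤ 10 b 1
    set T : ℕ → ℝ := fun n =>
      ∑ k ∈ Finset.Icc 1 n, (b k / k) * (Real.cos (k * x) - Real.cos (k * π)) with hTdef
    have htailD : |Φ - T m| ≤ 10 * b 1 := by
      have hten : Tendsto (fun n => T n - T m) atTop (𝓝 (Φ - T m)) := hT.sub_const _
      apply le_of_tendsto hten.abs
      filter_upwards [eventually_ge_atTop m] with n hn
      rw [hTdef]
      simp only []
      rw [sum_Icc_sub _ hn]
      have hD := tail_T b hpos hdec x (ne_of_gt hsx) m n
      refine le_trans hD ?_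
      -- numeric estimates
      have hbm1 : b (m + 1) ≤ b 1 := bmono b hdec le_rfl (by omega)
      have hbm0 : 0 < b (m + 1) := hpos _ (by omega)
      have hsin_lb : 1 / ((π : ℝ) * m) ≤ Real.sin (x / 2) := by
        have harg : x / 2 = 1 / (2 * m) := by rw [hxdef]; ring
        have h1 : (0:ℝ) ≤ 1 / (2 * m) := by positivity
        have h2 : (1:ℝ) / (2 * m) ≤ π / 2 := by
          rw [div_le_div_iff₀ (by positivity) (by norm_num)]
          nlinarith [Real.pi_gt_three]
        have := Real.mul_le_sin h1 h2
        rw [harg]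
        refine le_trans (le_of_eq ?_) this
        field_simp
      have hs_ub : 1 / |Real.sin (x / 2)| ≤ π * m := by
        rw [abs_of_pos hsx]
        rw [div_le_iff₀ hsx]
        have hπm : (0:ℝ) < π * m := by positivity
        rw [div_le_iff₀ hπm] at hsin_lb
        linarith
      have hs0 : 0 ≤ 1 / |Real.sin (x / 2)| := by positivity
      have hc : b (m + 1) / ((m:ℝ) + 1) ≤ b 1 / ((m:ℝ) + 1) :=
        div_le_div_of_nonneg_right hbm1 (by positivity)
      have hc0 : 0 ≤ b (m + 1) / ((m:ℝ) + 1) := by positivity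
      have kc1 : (b (m + 1) / ((m:ℝ) + 1)) * (2 * (1 / |Real.sin (x / 2)|))
          ≤ (b 1 / ((m:ℝ) + 1)) * (2 * (π * m)) := by
        apply mul_le_mul hc _ (by positivity) (by positivity)
        linarith [hs_ub]
      have kc2 : (b 1 / ((m:ℝ) + 1)) * (2 * (π * m)) ≤ 8 * b 1 := by
        rw [div_mul_eq_mul_div, div_le_iff₀ (by positivity : (0:ℝ) < (m:ℝ) + 1)]
        have hπm : π * (m:ℝ) ≤ 4 * (m:ℝ) :=
          mul_le_mul_of_nonneg_right Real.pi_le_four (by positivity)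
        nlinarith
      have kc3 : (b (m + 1) / ((m:ℝ) + 1)) * 2 ≤ 2 * b 1 := by
        have : b (m + 1) / ((m:ℝ) + 1) ≤ b (m + 1) := by
          rw [div_le_iff₀ (by positivity : (0:ℝ) < (m:ℝ) + 1)]
          nlinarith
        linarith
      linarith
    -- pairing: T m ≥ (1/2) * B
    have hcos : ∀ k : ℕ, 1 ≤ k → k ≤ m → 1 / 2 ≤ Real.cos (k * x) := by
      intro k hk1 hkm
      have hkm' : ((k:ℝ)) ≤ (m:ℝ) := by exact_mod_cast hkm
      have harg : (0:ℝ) ≤ (k:ℝ) * x := by positivity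
      have harg2 : (k:ℝ) * x ≤ 1 := by
        rw [hxdef, mul_one_div, div_le_one (by positivity)]; exact hkm'
      have := Real.one_sub_sq_div_two_le_cos (x := (k:ℝ) * x)
      nlinarith
    have hpair := pairing b hpos hdec x m hcos (N + 1) (le_of_eq hmdef.symm)
    rw [← hmdef] at hpair
    -- divergence
    have hB := hN m (by omega)
    -- conclude
    have h1 : T m - 10 * b 1 ≤ Φ := by
      have h2 := abs_le.mp htailD
      linarith [h2.1, h2.2]
    have h2 : (1/2) * (2 * A + 20 * b 1 + 2) ≤ T m := by
      refine le_trans ?_ hpair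
      linarith
    have h3 : Φ ≤ A := le_trans (le_abs_self _) hΦA
    linarith
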